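/- Let (A, C, λ) be a representable entwining in a monoidal category V, with representing object E, structural morphism β : E ⊗ C → A, and monoid structure (E, m_E, e_E) determined by (e_E ⊗ id_C) ≫ β = e_A ∘ ε_C and (m_E ⊗ id_C) ≫ β = m_A ∘ (β ⊗ A) ∘ (E ⊗ λ) ∘ (E ⊗ β ⊗ C) ∘ (E ⊗ E ⊗ δ_C). Let i : A → E be the unique morphism with (i ⊗ id_C) ≫ β = A ⊗ ε_C (composed with the unit isomorphism). Then i is a morphism of monoids: i ∘ e_A = e_E and m_E ∘ (i ⊗ i) = i ∘ m_A. -/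

import Mathlib

open CategoryTheory MonoidalCategory

universe v u

variable {V : Type u} [Category.{v} V] [MonoidalCategory V]

/-- **Proposition 6.3(ii).** Let `(A, C, λ)` be a representable entwining in a
monoidal category `V`, with representing object `E`, structural morphism
`β : E ⊗ C ⟶ A`, and monoid structure `(E, m_E, e_E)` determined by
`(e_E ⊗ C) ≫ β = e_A ∘ ε_C` and
`(m_E ⊗ C) ≫ β = m_A ∘ (β ⊗ A) ∘ (E ⊗ λ) ∘ (E ⊗ β ⊗ C) ∘ (E ⊗ E ⊗ δ_C)`.
Let `i : A ⟶ E` be the unique morphism with `(i ⊗ C) ≫ β = A ⊗ ε_C`.  Then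
`i` is a morphism of monoids: `i ∘ e_A = e_E` and `m_E ∘ (i ⊗ i) = i ∘ m_A`. -/
theorem representable_entwining_algebra_map
    (M : Mon V) (Cn : Comon V) (lam : M.X ⊗ Cn.X ⟶ Cn.X ⊗ M.X)
    (e₁ : (λ_ Cn.X).inv ≫ ((MonObj.one (X := M.X)) ▷ Cn.X) ≫ lam = (ρ_ Cn.X).inv ≫ (Cn.X ◁ (MonObj.one (X := M.X))))
    (e₂ : lam ≫ ((ComonObj.counit (X := Cn.X)) ▷ M.X) ≫ (λ_ M.X).hom = (M.X ◁ (ComonObj.counit (X := Cn.X))) ≫ (ρ_ M.X).hom)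
    (e₃ : (M.X ◁ (ComonObj.comul (X := Cn.X))) ≫ (α_ M.X Cn.X Cn.X).inv ≫ (lam ▷ Cn.X) ≫
        (α_ Cn.X M.X Cn.X).hom ≫ (Cn.X ◁ lam) =
      lam ≫ ((ComonObj.comul (X := Cn.X)) ▷ M.X) ≫ (α_ Cn.X Cn.X M.X).hom)
    (e₄ : ((MonObj.mul (X := M.X)) ▷ Cn.X) ≫ lam =
      (α_ M.X M.X Cn.X).hom ≫ (M.X ◁ lam) ≫ (α_ M.X Cn.X M.X).inv ≫
        (lam ▷ M.X) ≫ (α_ Cn.X M.X M.X).hom ≫ (Cn.X ◁ (MonObj.mul (X := M.X))))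
    (E : V) (β : E ⊗ Cn.X ⟶ M.X)
    (hrep : ∀ (W : V) (f : W ⊗ Cn.X ⟶ M.X), ∃! g : W ⟶ E, (g ▷ Cn.X) ≫ β = f)
    (eE : 𝟙_ V ⟶ E)
    (heE : (eE ▷ Cn.X) ≫ β = (λ_ Cn.X).hom ≫ (ComonObj.counit (X := Cn.X)) ≫ (MonObj.one (X := M.X)))
    (mE : E ⊗ E ⟶ E)
    (hmE : (mE ▷ Cn.X) ≫ β =
      (α_ E E Cn.X).hom ≫ (E ◁ (E ◁ (ComonObj.comul (X := Cn.X)))) ≫ (E ◁ (α_ E Cn.X Cn.X).inv) ≫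
        (E ◁ (β ▷ Cn.X)) ≫ (E ◁ lam) ≫ (α_ E Cn.X M.X).inv ≫
          (β ▷ M.X) ≫ (MonObj.mul (X := M.X)))
    (i : M.X ⟶ E)
    (hi : (i ▷ Cn.X) ≫ β = (M.X ◁ (ComonObj.counit (X := Cn.X))) ≫ (ρ_ M.X).hom) :
    (MonObj.one (X := M.X)) ≫ i = eE ∧ (i ⊗ₘ i) ≫ mE = (MonObj.mul (X := M.X)) ≫ i := by
  have key : ∀ {W : V} (f g : W ⟶ E),
      (f ▷ Cn.X) ≫ β = (g ▷ Cn.X) ≫ β → f = g := by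
    intro W f g h
    obtain ⟨u, -, hu⟩ := hrep W ((g ▷ Cn.X) ≫ β)
    exact (hu f h).trans (hu g rfl).symm
  constructor
  · apply key
    rw [comp_whiskerRight, Category.assoc, hi, heE]
    rw [← whisker_exchange_assoc]
    simp [unitors_inv_equal]
  · apply key
    rw [comp_whiskerRight, Category.assoc, hmE, comp_whiskerRight, Category.assoc, hi]
    -- inner lemma : (i▷C) ≫ (E◁δ) ≫ α⁻¹ ≫ (β▷C) = 𝟙
    have L1 : (i ▷ Cn.X) ≫ (E ◁ (ComonObj.comul (X := Cn.X))) ≫ (α_ E Cn.X Cn.X).inv ≫ (β ▷ Cn.X) =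
        𝟙 (M.X ⊗ Cn.X) := by
      rw [← whisker_exchange_assoc, associator_inv_naturality_left_assoc,
        ← comp_whiskerRight, hi, comp_whiskerRight,
        ← associator_inv_naturality_middle_assoc, ← MonoidalCategory.whiskerLeft_comp_assoc,
        ComonObj.counit_comul]
      simp
    calc ((i ⊗ₘ i) ▷ Cn.X) ≫ (α_ E E Cn.X).hom ≫ (E ◁ (E ◁ (ComonObj.comul (X := Cn.X)))) ≫
          (E ◁ (α_ E Cn.X Cn.X).inv) ≫ (E ◁ (β ▷ Cn.X)) ≫ (E ◁ lam) ≫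
          (α_ E Cn.X M.X).inv ≫ (β ▷ M.X) ≫ (MonObj.mul (X := M.X))
        = (α_ M.X M.X Cn.X).hom ≫ (M.X ◁ ((i ▷ Cn.X) ≫ (E ◁ (ComonObj.comul (X := Cn.X))) ≫
            (α_ E Cn.X Cn.X).inv ≫ (β ▷ Cn.X) ≫ lam)) ≫ (i ▷ (Cn.X ⊗ M.X)) ≫
            (α_ E Cn.X M.X).inv ≫ (β ▷ M.X) ≫ (MonObj.mul (X := M.X)) := by
          rw [MonoidalCategory.tensorHom_def]
          simp only [comp_whiskerRight, Category.assoc, whisker_assoc]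
          rw [associator_naturality_left_assoc]
          simp only [Iso.inv_hom_id_assoc, ← whisker_exchange_assoc]
          rw [← MonoidalCategory.whiskerLeft_comp_assoc, ← whisker_exchange,
            MonoidalCategory.whiskerLeft_comp_assoc]
          simp only [MonoidalCategory.whiskerLeft_comp, Category.assoc]
      _ = (α_ M.X M.X Cn.X).hom ≫ (M.X ◁ lam) ≫ (α_ M.X Cn.X M.X).inv ≫
            (((i ▷ Cn.X) ≫ β) ▷ M.X) ≫ (MonObj.mul (X := M.X)) := by
          rw [reassoc_of% L1, associator_inv_naturality_left_assoc, comp_whiskerRight,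
            Category.assoc]
      _ = (α_ M.X M.X Cn.X).hom ≫ (M.X ◁ (lam ≫ ((ComonObj.counit (X := Cn.X)) ▷ M.X) ≫ (λ_ M.X).hom)) ≫
            (MonObj.mul (X := M.X)) := by
          rw [hi, comp_whiskerRight, Category.assoc,
            ← associator_inv_naturality_middle_assoc]
          simp [MonoidalCategory.whiskerLeft_comp]
      _ = ((MonObj.mul (X := M.X)) ▷ Cn.X) ≫ (M.X ◁ (ComonObj.counit (X := Cn.X))) ≫ (ρ_ M.X).hom := by
          rw [e₂]
          rw [← whisker_exchange_assoc]
          simp
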